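/- Let A be a WCDD L0-matrix (indexed by a finite set). Then A is nonsingular, every diagonal entry of A is strictly positive, every diagonal entry of A^{-1} is strictly positive, and for all indices i ≠ j one has (A^{-1})_{ij} > 0 if and only if there is a walk in graph A from i to j. -/

import Mathlib

open Matrix Finset Filter Topology

noncomputable section

section MatrixDefs

variable {n : Type*} [Fintype n] [DecidableEq n]

/-- A Z-matrix: nonpositive off-diagonal entries. -/
def IsZMatrix (A : Matrix n n ℝ) : Prop := ∀ i j, i ≠ j → A i j ≤ 0

/-- An L0-matrix: a Z-matrix with nonnegative diagonal entries. -/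
def IsL0Matrix (A : Matrix n n ℝ) : Prop := IsZMatrix A ∧ ∀ i, 0 ≤ A i i

/-- Row `i` of `A` is strictly diagonally dominant. -/
def SDDRow (A : Matrix n n ℝ) (i : n) : Prop :=
  ∑ j ∈ Finset.univ.erase i, |A i j| < |A i i|

/-- Row `i` of `A` is weakly diagonally dominant. -/
def WDDRow (A : Matrix n n ℝ) (i : n) : Prop :=
  ∑ j ∈ Finset.univ.erase i, |A i j| ≤ |A i i|

def IsWDD (A : Matrix n n ℝ) : Prop := ∀ i, WDDRow A i

def IsSDD (A : Matrix n n ℝ) : Prop := ∀ i, SDDRow A i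

/-- A (nonempty) walk in the directed graph of `A` (edge `a → b` iff `A a b ≠ 0`). -/
def MWalk (A : Matrix n n ℝ) (i j : n) : Prop :=
  Relation.TransGen (fun a b => A a b ≠ 0) i j

/-- Weakly chained diagonally dominant matrix. -/
def IsWCDD (A : Matrix n n ℝ) : Prop :=
  IsWDD A ∧ ∀ i, ¬ SDDRow A i → ∃ j, SDDRow A j ∧ MWalk A i j

/-- Substochastic matrix: nonnegative entries and row sums at most one. -/
def IsSubstochastic (A : Matrix n n ℝ) : Prop :=
  (∀ i j, 0 ≤ A i j) ∧ ∀ i, ∑ j, A i j ≤ 1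

end MatrixDefs

/-- The data of a (discretized) symmetric nonzero-sum impulse game on the symmetric grid
`x (-N) < … < x 0 = 0 < … < x N`, indexed here by `Fin (2*N+1)` (so that index `N`
corresponds to the grid point `0`, and `Fin.rev` is the reflection `x ↦ -x`). -/
structure GameSetup (N : ℕ) where
  x : Fin (2*N+1) → ℝ
  hx_mono : StrictMono x
  hx_sym : ∀ i, x i.rev = -(x i)
  Z : Fin (2*N+1) → Finset ℝ
  hZ_ne : ∀ i, (Z i).Nonempty
  hZ_nonneg : ∀ i, ∀ d ∈ Z i, 0 ≤ d
  hZ_zero : ∀ i, 0 ≤ x i → Z i = {0}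
  B : (Fin (2*N+1) → ℝ) → Matrix (Fin (2*N+1)) (Fin (2*N+1)) ℝ
  c : (Fin (2*N+1) → ℝ) → Fin (2*N+1) → ℝ
  g : (Fin (2*N+1) → ℝ) → Fin (2*N+1) → ℝ
  hB_rd : ∀ δ δ' i, δ i = δ' i → B δ i = B δ' i
  hc_rd : ∀ δ δ' i, δ i = δ' i → c δ i = c δ' i
  hg_rd : ∀ δ δ' i, δ i = δ' i → g δ i = g δ' i
  hc_pos : ∀ δ, (∀ i, δ i ∈ Z i) → ∀ i, 0 < c δ i
  L : Matrix (Fin (2*N+1)) (Fin (2*N+1)) ℝ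
  f : Fin (2*N+1) → ℝ

variable {N : ℕ}

/-- The symmetry (permutation) matrix `S v (x) = v (-x)`. -/
def Smat (N : ℕ) : Matrix (Fin (2*N+1)) (Fin (2*N+1)) ℝ :=
  Matrix.of fun i j => if j = i.rev then (1:ℝ) else 0

namespace GameSetup

variable (s : GameSetup N)

/-- Admissible impulse functions: `δ i ∈ Z i` for all grid points. -/
def Adm (δ : Fin (2*N+1) → ℝ) : Prop := ∀ i, δ i ∈ s.Z i

/-- The discrete loss operator `M v = max_{δ ∈ Z} (B δ v - c δ)` (entrywise, using
row-decoupledness to maximize row by row). -/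
def M (v : Fin (2*N+1) → ℝ) (i : Fin (2*N+1)) : ℝ :=
  (s.Z i).sup' (s.hZ_ne i) fun d => (s.B fun _ => d).mulVec v i - s.c (fun _ => d) i

/-- `δstar v i`: the largest impulse in `Z i` attaining the maximum defining `M v i`. -/
def δstar (v : Fin (2*N+1) → ℝ) (i : Fin (2*N+1)) : ℝ :=
  WithBot.unbotD 0 ((s.Z i).filter fun d =>
    (s.B fun _ => d).mulVec v i - s.c (fun _ => d) i = s.M v i).max

/-- The discrete gain operator `H v = S B(δ*(v)) S v + g (S δ*(v))`. -/
def H (v : Fin (2*N+1) → ℝ) : Fin (2*N+1) → ℝ :=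
  (Smat N * s.B (s.δstar v) * Smat N).mulVec v + s.g (s.δstar v ∘ Fin.rev)

/-- A (discrete) strategy: an intervention region `I ⊆ G_{<0}` and an admissible
impulse function. -/
structure Strategy where
  I : Finset (Fin (2*N+1))
  δ : Fin (2*N+1) → ℝ
  hI : ∀ i ∈ I, s.x i < 0
  hδ : ∀ i, δ i ∈ s.Z i

/-- The diagonal indicator matrix of the intervention region of a strategy. -/
def Psi (φ : s.Strategy) : Matrix (Fin (2*N+1)) (Fin (2*N+1)) ℝ :=
  Matrix.diagonal fun i => if i ∈ φ.I then (1:ℝ) else 0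

/-- `𝔸(φ,φ̄) = Id − (Id − Ψ̄ − SΨS)(Id + L) − Ψ̄ B(δ̄)`. -/
def Amat (φ φ' : s.Strategy) : Matrix (Fin (2*N+1)) (Fin (2*N+1)) ℝ :=
  1 - (1 - s.Psi φ' - Smat N * s.Psi φ * Smat N) * (1 + s.L) - s.Psi φ' * s.B φ'.δ

/-- `𝔹(φ) = S Ψ B(δ) S`. -/
def Bmat (φ : s.Strategy) : Matrix (Fin (2*N+1)) (Fin (2*N+1)) ℝ :=
  Smat N * s.Psi φ * s.B φ.δ * Smat N

/-- `ℂ(φ,φ̄) = (Id − Ψ̄ − SΨS) f − Ψ̄ c(δ̄) + SΨS g(Sδ)`. -/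
def Cvec (φ φ' : s.Strategy) : Fin (2*N+1) → ℝ :=
  (1 - s.Psi φ' - Smat N * s.Psi φ * Smat N).mulVec s.f - (s.Psi φ').mulVec (s.c φ'.δ)
    + (Smat N * s.Psi φ * Smat N).mulVec (s.g (φ.δ ∘ Fin.rev))

/-- Assumption (A0). -/
def A0 : Prop := ∀ φ : s.Strategy, ∀ i ∈ φ.I, ∃ j, j ∉ φ.I ∧ MWalk (s.B φ.δ) i j

/-- Assumption (A1). -/
def A1 : Prop :=
  (IsSDD (-s.L) ∧ IsL0Matrix (-s.L)) ∧
    ∀ δ, s.Adm δ → IsWDD (1 - s.B δ) ∧ IsL0Matrix (1 - s.B δ)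

/-- Assumption (A2). -/
def A2 : Prop := ∀ δ, s.Adm δ → ∀ i, 0 ≤ s.B δ i i

/-- Assumption (A0'). -/
def A0' : Prop :=
  ∀ φ φ' : s.Strategy, ∀ i, (i ∈ φ'.I ∨ i.rev ∈ φ.I) →
    ∃ j, ¬(j ∈ φ'.I ∨ j.rev ∈ φ.I) ∧
      MWalk (s.Psi φ' * s.B φ'.δ + Smat N * s.Psi φ * s.B φ.δ * Smat N) i j

/-- Identity-row condition: zero impulse gives the corresponding identity row. -/
def IdRow : Prop :=
  ∀ δ, s.Adm δ → ∀ i, δ i = 0 →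
    s.B δ i = (1 : Matrix (Fin (2*N+1)) (Fin (2*N+1)) ℝ) i

/-- The discrete QVI system: `Mv − v ≤ 0` on `G`, `Hv − v = 0` on `−I*(v)`, and
`max{Lv + f, Mv − v} = 0` on `−C*(v)`. -/
def SolvesQVI (v : Fin (2*N+1) → ℝ) : Prop :=
  (∀ i, s.M v i - v i ≤ 0) ∧
  (∀ i, s.M v i.rev - v i.rev = 0 → s.H v i - v i = 0) ∧
  (∀ i, s.M v i.rev - v i.rev < 0 →
    max (s.L.mulVec v i + s.f i) (s.M v i - v i) = 0)

/-- The intervention region induced by a payoff `v`. -/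
def indI (v : Fin (2*N+1) → ℝ) : Finset (Fin (2*N+1)) :=
  Finset.univ.filter fun i => s.x i < 0 ∧ s.L.mulVec v i + s.f i ≤ s.M v i - v i

/-- `φ` is the strategy induced by the payoff `v`. -/
def IsInduced (v : Fin (2*N+1) → ℝ) (φ : s.Strategy) : Prop :=
  φ.I = s.indI v ∧ φ.δ = s.δstar v

/-- An algorithm sequence: payoffs `v^k` with induced strategies `φ^k` satisfying the
fixed-point recurrence `𝔸(φ^k,φ^{k+1}) v^{k+1} = 𝔹(φ^k) v^k + ℂ(φ^k,φ^{k+1})`. -/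
def IsAlgSeq (v : ℕ → Fin (2*N+1) → ℝ) (φ : ℕ → s.Strategy) : Prop :=
  (∀ k, s.IsInduced (v k) (φ k)) ∧
  ∀ k, (s.Amat (φ k) (φ (k+1))).mulVec (v (k+1)) =
    (s.Bmat (φ k)).mulVec (v k) + s.Cvec (φ k) (φ (k+1))

/-- The discrete unique impulse property. -/
def UIP (v : Fin (2*N+1) → ℝ) : Prop :=
  ∀ i, s.M v i = v i →
    ∃! d, d ∈ s.Z i ∧ (s.B fun _ => d).mulVec v i - s.c (fun _ => d) i = s.M v i

end GameSetup

section Aux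

variable {n : Type*} [Fintype n] [DecidableEq n]

/-- Kernel argument: a WCDD matrix has trivial kernel. -/
lemma wcdd_mulVec_eq_zero {A : Matrix n n ℝ} (hW : IsWCDD A) {x : n → ℝ}
    (hx : A.mulVec x = 0) : x = 0 := by
  by_contra hne
  obtain ⟨i0, hi0⟩ : ∃ i, x i ≠ 0 := Function.ne_iff.mp hne
  have hnonempty : (Finset.univ : Finset n).Nonempty := ⟨i0, mem_univ i0⟩
  set M : ℝ := Finset.univ.sup' hnonempty (fun i => |x i|) with hM
  have hle : ∀ j, |x j| ≤ M := fun j => Finset.le_sup' (fun i => |x i|) (mem_univ j)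
  have hMpos : 0 < M := lt_of_lt_of_le (abs_pos.mpr hi0) (hle i0)
  -- the key step lemma
  have step : ∀ i, |x i| = M → (¬ SDDRow A i ∧ ∀ j, A i j ≠ 0 → |x j| = M) := by
    intro i hi
    have hrow : A i i * x i = -∑ j ∈ Finset.univ.erase i, A i j * x j := by
      have h0 : ∑ j, A i j * x j = 0 := congrFun hx i
      have h1 := Finset.add_sum_erase Finset.univ (fun j => A i j * x j) (mem_univ i)
      beta_reduce at h1
      rw [h0] at h1
      linarith
    have h1 : |A i i| * M ≤ ∑ j ∈ Finset.univ.erase i, |A i j| * |x j| := by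
      calc |A i i| * M = |A i i * x i| := by rw [abs_mul, hi]
        _ = |∑ j ∈ Finset.univ.erase i, A i j * x j| := by rw [hrow, abs_neg]
        _ ≤ ∑ j ∈ Finset.univ.erase i, |A i j * x j| := Finset.abs_sum_le_sum_abs _ _
        _ = ∑ j ∈ Finset.univ.erase i, |A i j| * |x j| := by simp [abs_mul]
    have h2 : ∑ j ∈ Finset.univ.erase i, |A i j| * |x j|
        ≤ ∑ j ∈ Finset.univ.erase i, |A i j| * M :=
      Finset.sum_le_sum fun j _ => mul_le_mul_of_nonneg_left (hle j) (abs_nonneg _)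
    have h3 : ∑ j ∈ Finset.univ.erase i, |A i j| * M ≤ |A i i| * M := by
      rw [← Finset.sum_mul]
      exact mul_le_mul_of_nonneg_right (hW.1 i) hMpos.le
    constructor
    · intro hSDD
      have : ∑ j ∈ Finset.univ.erase i, |A i j| * M < |A i i| * M := by
        rw [← Finset.sum_mul]
        exact mul_lt_mul_of_pos_right hSDD hMpos
      linarith
    · intro j hAij
      by_cases hji : j = i
      · exact hji ▸ hi
      have heq : ∑ j ∈ Finset.univ.erase i, |A i j| * (M - |x j|) = 0 := by
        have : ∑ j ∈ Finset.univ.erase i, |A i j| * |x j|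
            = ∑ j ∈ Finset.univ.erase i, |A i j| * M := le_antisymm h2 (by linarith)
        simp only [mul_sub]
        rw [Finset.sum_sub_distrib, this, sub_self]
      have hterm := (Finset.sum_eq_zero_iff_of_nonneg (fun j _ =>
        mul_nonneg (abs_nonneg _) (by linarith [hle j]))).mp heq j
        (Finset.mem_erase.mpr ⟨hji, mem_univ j⟩)
      rcases mul_eq_zero.mp hterm with h | h
      · exact absurd (abs_eq_zero.mp h) hAij
      · linarith [hle j]
  -- walk closure
  have closure : ∀ i t, MWalk A i t → |x i| = M → |x t| = M := by
    intro i t hwalk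
    induction hwalk with
    | single h => exact fun hi => (step _ hi).2 _ h
    | tail h1 h2 ih => exact fun hi => (step _ (ih hi)).2 _ h2
  obtain ⟨i1, -, hi1⟩ := Finset.exists_mem_eq_sup' hnonempty (fun i => |x i|)
  have hP1 : |x i1| = M := hi1.symm
  obtain ⟨t, htSDD, hwalk⟩ := hW.2 i1 (step i1 hP1).1
  exact (step t (closure i1 t hwalk hP1)).1 htSDD

/-- Positive diagonal. -/
lemma wcdd_diag_pos {A : Matrix n n ℝ} (hW : IsWCDD A) (hL0 : IsL0Matrix A) (i : n) :
    0 < A i i := by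
  rcases lt_or_eq_of_le (hL0.2 i) with h | h
  · exact h
  exfalso
  have hzero : ∀ j, A i j = 0 := by
    intro j
    by_cases hji : j = i
    · exact hji ▸ h.symm
    have := hW.1 i
    rw [WDDRow, ← h, abs_zero] at this
    have hnn : ∀ k ∈ Finset.univ.erase i, (0:ℝ) ≤ |A i k| := fun k _ => abs_nonneg _
    have := (Finset.sum_eq_zero_iff_of_nonneg hnn).mp (le_antisymm this (Finset.sum_nonneg hnn))
      j (Finset.mem_erase.mpr ⟨hji, mem_univ j⟩)
    exact abs_eq_zero.mp this
  have hnotSDD : ¬ SDDRow A i := by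
    rw [SDDRow, ← h, abs_zero]
    push_neg
    exact Finset.sum_nonneg fun k _ => abs_nonneg _
  obtain ⟨t, -, hwalk⟩ := hW.2 i hnotSDD
  have : ∃ j, A i j ≠ 0 := by
    induction hwalk with
    | single h => exact ⟨_, h⟩
    | tail _ _ ih => exact ih
  obtain ⟨j, hj⟩ := this
  exact hj (hzero j)

lemma IsSubstochastic.mul {P Q : Matrix n n ℝ} (hP : IsSubstochastic P)
    (hQ : IsSubstochastic Q) : IsSubstochastic (P * Q) := by
  constructor
  · intro i j
    rw [Matrix.mul_apply]
    exact Finset.sum_nonneg fun l _ => mul_nonneg (hP.1 i l) (hQ.1 l j)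
  · intro i
    calc ∑ j, (P * Q) i j = ∑ l, P i l * ∑ j, Q l j := by
          simp only [Matrix.mul_apply]
          rw [Finset.sum_comm]
          simp [Finset.mul_sum]
      _ ≤ ∑ l, P i l * 1 := Finset.sum_le_sum fun l _ =>
          mul_le_mul_of_nonneg_left (hQ.2 l) (hP.1 i l)
      _ ≤ 1 := by simpa using hP.2 i
lemma IsSubstochastic.pow {B : Matrix n n ℝ} (hB : IsSubstochastic B) (k : ℕ) :
    IsSubstochastic (B ^ k) := by
  induction k with
  | zero =>
    constructor
    · intro i j; simp [Matrix.one_apply]; positivity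
    · intro i; simp [Matrix.one_apply]
  | succ k ih => rw [pow_succ]; exact ih.mul hB

lemma IsSubstochastic.entry_le_one {B : Matrix n n ℝ} (hB : IsSubstochastic B) (i j : n) :
    B i j ≤ 1 :=
  le_trans (Finset.single_le_sum (fun l _ => hB.1 i l) (mem_univ j)) (hB.2 i)

/-- Walks give positive entries of powers. -/
lemma mwalk_pow_pos {B : Matrix n n ℝ} (hB : ∀ i j, 0 ≤ B i j) {i j : n}
    (h : MWalk B i j) : ∃ k, 0 < (B ^ (k + 1)) i j := by
  induction h with
  | single h =>
    exact ⟨0, by rw [pow_one]; exact lt_of_le_of_ne (hB _ _) (Ne.symm h)⟩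
  | tail h1 h2 ih =>
    obtain ⟨k, hk⟩ := ih
    refine ⟨k + 1, ?_⟩
    rw [pow_succ, Matrix.mul_apply]
    have hpow : ∀ a b, 0 ≤ (B ^ (k+1)) a b := fun a b => by
      induction' (k+1) with m ih generalizing a b
      · simp [Matrix.one_apply]; positivity
      · rw [pow_succ, Matrix.mul_apply]
        exact Finset.sum_nonneg fun l _ => mul_nonneg (ih a l) (hB l b)
    refine Finset.sum_pos' (fun l _ => mul_nonneg (hpow _ _) (hB _ _)) ?_
    exact ⟨_, mem_univ _, mul_pos hk (lt_of_le_of_ne (hB _ _) (Ne.symm h2))⟩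

/-- Nonnegative powers of a nonnegative matrix. -/
lemma pow_nonneg' {B : Matrix n n ℝ} (hB : ∀ i j, 0 ≤ B i j) (k : ℕ) (i j : n) :
    0 ≤ (B ^ k) i j := by
  induction k generalizing i j with
  | zero => simp [Matrix.one_apply]; positivity
  | succ m ih =>
    rw [pow_succ, Matrix.mul_apply]
    exact Finset.sum_nonneg fun l _ => mul_nonneg (ih i l) (hB l j)

/-- Positive entries of powers give walks. -/
lemma pow_pos_mwalk {B : Matrix n n ℝ} (hB : ∀ i j, 0 ≤ B i j) :
    ∀ (k : ℕ) (i j : n), 0 < (B ^ k) i j → i = j ∨ MWalk B i j := by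
  intro k
  induction k with
  | zero =>
    intro i j h
    by_contra hc
    push_neg at hc
    rw [pow_zero, Matrix.one_apply_ne] at h
    · exact lt_irrefl _ h
    · intro he; exact hc.1 he |>.elim
  | succ m ih =>
    intro i j h
    rw [pow_succ, Matrix.mul_apply] at h
    obtain ⟨l, -, hl⟩ : ∃ l ∈ Finset.univ, 0 < (B ^ m) i l * B l j := by
      by_contra hc
      push_neg at hc
      have : ∑ l, (B ^ m) i l * B l j ≤ 0 := Finset.sum_nonpos hc
      linarith
    have hBm : 0 < (B ^ m) i l := by
      rcases lt_or_eq_of_le (pow_nonneg' hB m i l) with h' | h'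
      · exact h'
      · rw [← h'] at hl; simp at hl
    have hBlj : 0 < B l j := by
      rcases lt_or_eq_of_le (hB l j) with h' | h'
      · exact h'
      · rw [← h'] at hl; simp at hl
    have hedge : B l j ≠ 0 := ne_of_gt hBlj
    right
    rcases ih i l hBm with rfl | hw
    · exact Relation.TransGen.single hedge
    · exact Relation.TransGen.tail hw hedge

/-- Dropping self-loops from a walk between distinct endpoints. -/
lemma transGen_offdiag {α : Type*} {r : α → α → Prop} {i j : α}
    (h : Relation.TransGen r i j) :
    i ≠ j → Relation.TransGen (fun a b => a ≠ b ∧ r a b) i j := by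
  induction h with
  | single h => exact fun hij => Relation.TransGen.single ⟨hij, h⟩
  | @tail b c h1 h2 ih =>
    intro hic
    by_cases hbc : b = c
    · exact hbc ▸ ih (hbc ▸ hic)
    by_cases hib : i = b
    · exact Relation.TransGen.single ⟨hic, hib ▸ h2⟩
    · exact Relation.TransGen.tail (ih hib) ⟨hbc, h2⟩

end Aux

section Core

variable {n : Type*} [Fintype n] [DecidableEq n]

lemma geom_partial (B : Matrix n n ℝ) (hdet : (1 - B).det ≠ 0) (K : ℕ) :
    (∑ k ∈ Finset.range K, B ^ k) = (1 - B)⁻¹ - B ^ K * (1 - B)⁻¹ := by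
  have h1 : (∑ k ∈ Finset.range K, B ^ k) * (1 - B) = 1 - B ^ K := by
    have hg := geom_sum_mul B K
    have h2 : (∑ k ∈ Finset.range K, B ^ k) * (1 - B)
        = -((∑ k ∈ Finset.range K, B ^ k) * (B - 1)) := by noncomm_ring
    rw [h2, hg]; noncomm_ring
  have hinv := Matrix.mul_nonsing_inv (1 - B) (isUnit_iff_ne_zero.mpr hdet)
  calc (∑ k ∈ Finset.range K, B ^ k)
      = (∑ k ∈ Finset.range K, B ^ k) * ((1 - B) * (1 - B)⁻¹) := by rw [hinv, mul_one]
    _ = (1 - B ^ K) * (1 - B)⁻¹ := by rw [← mul_assoc, h1]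
    _ = (1 - B)⁻¹ - B ^ K * (1 - B)⁻¹ := by noncomm_ring

lemma entry_partial (B : Matrix n n ℝ) (hdet : (1 - B).det ≠ 0) (K : ℕ) (a b : n) :
    ∑ k ∈ Finset.range K, (B ^ k) a b = (1 - B)⁻¹ a b - (B ^ K * (1 - B)⁻¹) a b := by
  have hid := congrFun (congrFun (geom_partial B hdet K) a) b
  simpa [Matrix.sum_apply, Matrix.sub_apply] using hid

lemma key_tendsto (B : Matrix n n ℝ) (hsub : IsSubstochastic B) (hdet : (1 - B).det ≠ 0)
    (i j : n) :
    Tendsto (fun K => ∑ k ∈ Finset.range K, (B ^ k) i j) atTop (𝓝 ((1 - B)⁻¹ i j)) := by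
  set C := (1 - B)⁻¹ with hC
  have hnn : ∀ k (a b : n), 0 ≤ (B ^ k) a b := fun k a b => (hsub.pow k).1 a b
  set s : n → n → ℕ → ℝ := fun a b K => ∑ k ∈ Finset.range K, (B ^ k) a b with hs
  have hmono : ∀ a b, Monotone (s a b) := by
    intro a b K L hKL
    exact Finset.sum_le_sum_of_subset_of_nonneg (Finset.range_subset_range.mpr hKL)
      fun k _ _ => hnn k a b
  have hbdd : ∀ a b, BddAbove (Set.range (s a b)) := by
    intro a b
    refine ⟨C a b + ∑ m, |C m b|, ?_⟩
    rintro _ ⟨K, rfl⟩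
    rw [hs]
    simp only
    rw [entry_partial B hdet K a b]
    have herr : |(B ^ K * C) a b| ≤ ∑ m, |C m b| := by
      rw [Matrix.mul_apply]
      calc |∑ m, (B ^ K) a m * C m b| ≤ ∑ m, |(B ^ K) a m * C m b| :=
            Finset.abs_sum_le_sum_abs _ _
        _ ≤ ∑ m, |C m b| := Finset.sum_le_sum fun m _ => by
            rw [abs_mul, abs_of_nonneg (hnn K a m)]
            calc (B ^ K) a m * |C m b| ≤ 1 * |C m b| :=
                  mul_le_mul_of_nonneg_right ((hsub.pow K).entry_le_one a m) (abs_nonneg _)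
              _ = |C m b| := one_mul _
    have := abs_le.mp herr
    linarith
  -- powers tend to 0 entrywise
  have hpow0 : ∀ a b, Tendsto (fun K => (B ^ K) a b) atTop (𝓝 0) := by
    intro a b
    have hlim : Tendsto (s a b) atTop (𝓝 (⨆ K, s a b K)) :=
      tendsto_atTop_ciSup (hmono a b) (hbdd a b)
    have hlim' : Tendsto (fun K => s a b (K + 1)) atTop (𝓝 (⨆ K, s a b K)) :=
      hlim.comp (tendsto_add_atTop_nat 1)
    have hdiff : (fun K => (B ^ K) a b) = fun K => s a b (K + 1) - s a b K := by
      funext K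
      rw [hs]
      simp only
      rw [Finset.sum_range_succ]
      ring
    rw [hdiff]
    simpa using hlim'.sub hlim
  have herr0 : Tendsto (fun K => (B ^ K * C) i j) atTop (𝓝 0) := by
    have : ∀ K, (B ^ K * C) i j = ∑ m, (B ^ K) i m * C m j := fun K => Matrix.mul_apply
    simp only [Matrix.mul_apply]
    have := tendsto_finset_sum (Finset.univ : Finset n)
      (fun m _ => (hpow0 i m).mul_const (C m j))
    simpa using this
  have : (fun K => s i j K) = fun K => C i j - (B ^ K * C) i j := by
    funext K; exact entry_partial B hdet K i j
  have hgoal : (fun K => ∑ k ∈ Finset.range K, (B ^ k) i j)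
      = fun K => C i j - (B ^ K * C) i j := this
  rw [hgoal]
  simpa using (tendsto_const_nhds (x := C i j)).sub herr0

end Core

/-- A WCDD L0-matrix is nonsingular, has strictly positive diagonal
entries, its inverse has strictly positive diagonal entries, and for `i ≠ j` the entry
`(A⁻¹)_{ij}` is strictly positive iff there is a walk from `i` to `j` in graph `A`. -/
theorem statement7 {n : Type*} [Fintype n] [DecidableEq n] (A : Matrix n n ℝ)
    (hWCDD : IsWCDD A) (hL0 : IsL0Matrix A) :
    IsUnit A.det ∧ (∀ i, 0 < A i i) ∧ (∀ i, 0 < A⁻¹ i i) ∧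
      ∀ i j, i ≠ j → (0 < A⁻¹ i j ↔ MWalk A i j) := by
  have hdiag : ∀ i, 0 < A i i := wcdd_diag_pos hWCDD hL0
  have hdetA : A.det ≠ 0 := by
    intro h
    obtain ⟨v, hv, hv0⟩ := Matrix.exists_mulVec_eq_zero_iff.mpr h
    exact hv (wcdd_mulVec_eq_zero hWCDD hv0)
  set d : n → ℝ := fun i => (A i i)⁻¹ with hd
  have hdpos : ∀ i, 0 < d i := fun i => inv_pos.mpr (hdiag i)
  set D : Matrix n n ℝ := Matrix.diagonal d with hD
  set B : Matrix n n ℝ := 1 - D * A with hB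
  have hB_apply : ∀ i j, B i j = if i = j then 0 else -((A i i)⁻¹ * A i j) := by
    intro i j
    rw [hB, Matrix.sub_apply, hD, Matrix.diagonal_mul, Matrix.one_apply]
    by_cases hij : i = j
    · subst hij; simp [hd, inv_mul_cancel₀ (hdiag i).ne']
    · simp [hij, hd]
  have hBnonneg : ∀ i j, 0 ≤ B i j := by
    intro i j
    rw [hB_apply]
    by_cases hij : i = j
    · simp [hij]
    · simp only [hij, if_false, neg_nonneg]
      exact mul_nonpos_of_nonneg_of_nonpos (hdpos i).le (hL0.1 i j hij)
  have hBrow : ∀ i, ∑ j, B i j ≤ 1 := by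
    intro i
    have hBii : B i i = 0 := by rw [hB_apply]; simp
    have hsplit := Finset.add_sum_erase Finset.univ (fun j => B i j) (mem_univ i)
    beta_reduce at hsplit
    rw [hBii, zero_add] at hsplit
    rw [← hsplit]
    have habs : ∀ j ∈ Finset.univ.erase i, B i j = (A i i)⁻¹ * |A i j| := by
      intro j hj
      have hji : i ≠ j := fun h => (Finset.mem_erase.mp hj).1 h.symm
      rw [hB_apply, if_neg hji, abs_of_nonpos (hL0.1 i j hji)]
      ring
    rw [Finset.sum_congr rfl habs, ← Finset.mul_sum]
    calc (A i i)⁻¹ * ∑ j ∈ Finset.univ.erase i, |A i j|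
        ≤ (A i i)⁻¹ * |A i i| := mul_le_mul_of_nonneg_left (hWCDD.1 i) (hdpos i).le
      _ = 1 := by rw [abs_of_pos (hdiag i), inv_mul_cancel₀ (hdiag i).ne']
  have hsub : IsSubstochastic B := ⟨hBnonneg, hBrow⟩
  have h1B : (1 : Matrix n n ℝ) - B = D * A := by rw [hB]; noncomm_ring
  have hdetD : D.det ≠ 0 := by
    rw [hD, Matrix.det_diagonal]
    exact Finset.prod_ne_zero_iff.mpr fun i _ => (hdpos i).ne'
  have hdet1B : (1 - B).det ≠ 0 := by
    rw [h1B, Matrix.det_mul]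
    exact mul_ne_zero hdetD hdetA
  set C : Matrix n n ℝ := (1 - B)⁻¹ with hC
  have hAinv : ∀ i j, A⁻¹ i j = C i j * d j := by
    have hDinv : D⁻¹ * D = 1 := Matrix.nonsing_inv_mul D (isUnit_iff_ne_zero.mpr hdetD)
    have : A⁻¹ = C * D := by
      calc A⁻¹ = A⁻¹ * (D⁻¹ * D) := by rw [hDinv, mul_one]
        _ = (A⁻¹ * D⁻¹) * D := by rw [mul_assoc]
        _ = (D * A)⁻¹ * D := by rw [Matrix.mul_inv_rev]
        _ = C * D := by rw [hC, h1B]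
    intro i j
    rw [this, hD, Matrix.mul_diagonal]
  -- corollaries of the geometric series
  have hkey := fun i j => key_tendsto B hsub hdet1B i j
  have hCge : ∀ (k : ℕ) (i j : n), (B ^ k) i j ≤ C i j := by
    intro k i j
    have hmono : Monotone (fun K => ∑ m ∈ Finset.range K, (B ^ m) i j) := by
      intro K L hKL
      exact Finset.sum_le_sum_of_subset_of_nonneg (Finset.range_subset_range.mpr hKL)
        fun m _ _ => (hsub.pow m).1 i j
    have h1 := hmono.ge_of_tendsto (hkey i j) (k + 1)
    have h2 : (B ^ k) i j ≤ ∑ m ∈ Finset.range (k + 1), (B ^ m) i j :=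
      Finset.single_le_sum (f := fun m => (B ^ m) i j)
        (fun m _ => (hsub.pow m).1 i j) (Finset.self_mem_range_succ k)
    exact h2.trans h1
  have hCzero : ∀ i j, (∀ k, (B ^ k) i j = 0) → C i j = 0 := by
    intro i j hall
    have : Tendsto (fun K => ∑ m ∈ Finset.range K, (B ^ m) i j) atTop (𝓝 0) := by
      have : (fun K => ∑ m ∈ Finset.range K, (B ^ m) i j) = fun _ => (0:ℝ) := by
        funext K; exact Finset.sum_eq_zero fun m _ => hall m
      rw [this]; exact tendsto_const_nhds
    exact (tendsto_nhds_unique (hkey i j) this)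
  -- diagonal of the inverse
  have hCdiagpos : ∀ i, 0 < C i i := fun i =>
    lt_of_lt_of_le (by norm_num : (0:ℝ) < 1)
      (by simpa using hCge 0 i i)
  -- edges of B vs A
  have hedgeB : ∀ a b, B a b ≠ 0 ↔ (a ≠ b ∧ A a b ≠ 0) := by
    intro a b
    rw [hB_apply]
    by_cases hab : a = b
    · simp [hab]
    · simp only [hab, if_false, ne_eq, neg_eq_zero, mul_eq_zero, not_or, not_false_iff,
        true_and]
      constructor
      · intro h; exact h.2
      · intro h; exact ⟨inv_ne_zero (hdiag a).ne', h⟩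
  refine ⟨isUnit_iff_ne_zero.mpr hdetA, hdiag, ?_, ?_⟩
  · intro i
    rw [hAinv]
    exact mul_pos (hCdiagpos i) (hdpos i)
  · intro i j hij
    constructor
    · intro hpos
      have hCpos : 0 < C i j := by
        by_contra hcon
        push_neg at hcon
        have : A⁻¹ i j ≤ 0 := by
          rw [hAinv]
          exact mul_nonpos_of_nonpos_of_nonneg hcon (hdpos j).le
        linarith
      obtain ⟨k, hk⟩ : ∃ k, (B ^ k) i j ≠ 0 := by
        by_contra hall
        push_neg at hall
        rw [hCzero i j hall] at hCpos
        exact lt_irrefl _ hCpos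
      have hkpos : 0 < (B ^ k) i j := lt_of_le_of_ne (pow_nonneg' hBnonneg k i j) (Ne.symm hk)
      rcases pow_pos_mwalk hBnonneg k i j hkpos with rfl | hw
      · exact absurd rfl hij
      · exact Relation.TransGen.mono (fun a b h => ((hedgeB a b).mp h).2) i j hw
    · intro hwalk
      have hwB : MWalk B i j := by
        have h' := transGen_offdiag hwalk hij
        exact Relation.TransGen.mono (fun a b h => (hedgeB a b).mpr h) i j h'
      obtain ⟨k, hk⟩ := mwalk_pow_pos hBnonneg hwB
      have : 0 < C i j := lt_of_lt_of_le hk (hCge (k + 1) i j)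
      rw [hAinv]
      exact mul_pos this (hdpos j)


end
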